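/- arXiv:1611.02694 — 2 statements merged into one kernel-verified Lean document; each statement's English description precedes it below -/
import Mathlib

section
/- Let κ be an infinite cardinal and let Col(ω, κ) be the poset of finite partial functions from ω to κ, ordered by reverse inclusion (p ≤ q iff p extends q). Then the regular open algebra R.O.(Col(ω, κ)) — the complete Boolean algebra of regular open subsets of Col(ω, κ) in the topology generated by the principal down-sets O_p = {q : q ≤ p}, ordered by inclusion — is countably generated: there exists a countable set X of regular open subsets such that the only complete Boolean subalgebra of R.O.(Col(ω, κ)) containing X is R.O.(Col(ω, κ)) itself. -/
universe u

open Cardinal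

/-- `Col α` (for `#α = κ`, this is `Col(ω, κ)`): finite partial functions from `ℕ`
to `α`, represented as functions `ℕ → Option α` with finite support. -/
structure Col (α : Type u) where
  toFun : ℕ → Option α
  finite : {n : ℕ | toFun n ≠ none}.Finite

/-- `Col α` is ordered by reverse inclusion: `p ≤ q` iff `p` extends `q`. -/
instance Col.instPartialOrder (α : Type u) : PartialOrder (Col α) where
  le p q := ∀ (n : ℕ) (a : α), q.toFun n = some a → p.toFun n = some a
  le_refl p := fun _ _ h => h
  le_trans p q r hpq hqr := fun n a h => hpq n a (hqr n a h)
  le_antisymm p q hpq hqp := by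
    have h : p.toFun = q.toFun := by
      funext n
      cases hq : q.toFun n with
      | some a => exact hpq n a hq
      | none =>
        cases hp : p.toFun n with
        | some a =>
          exact absurd (hqp n a hp) (by rw [hq]; simp)
        | none => rfl
    cases p with
    | mk pf pfin =>
      cases q with
      | mk qf qfin =>
        congr 1

/-- The topology on `Col α` generated by the principal down-sets
`O_p = {q : q ≤ p}`. -/
instance Col.instTopologicalSpace (α : Type u) : TopologicalSpace (Col α) :=
  TopologicalSpace.generateFrom {S : Set (Col α) | ∃ p : Col α, S = {q : Col α | q ≤ p}}

/-- The regular open sets of `Col α`: sets equal to the interior of their closure.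
These form the regular open algebra `R.O.(Col(ω, κ))`. -/
structure RegOpen (α : Type u) where
  carrier : Set (Col α)
  regular : interior (closure carrier) = carrier

namespace ColRO

variable {α : Type u}

/-- Forcing-style regularization operator. -/
def reg (A : Set (Col α)) : Set (Col α) := {q | ∀ r, r ≤ q → ∃ s, s ≤ r ∧ s ∈ A}

/-- Forcing-style complement. -/
def neg (A : Set (Col α)) : Set (Col α) := {q | ∀ r, r ≤ q → r ∉ A}

lemma isLowerSet_reg (A : Set (Col α)) : IsLowerSet (reg A) :=
  fun _a b h ha r hr => ha r (hr.trans h)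

lemma isLowerSet_neg (A : Set (Col α)) : IsLowerSet (neg A) :=
  fun _a b h ha r hr => ha r (hr.trans h)

lemma reg_mono {A B : Set (Col α)} (h : A ⊆ B) : reg A ⊆ reg B :=
  fun q hq r hr => by obtain ⟨s, hs, hsA⟩ := hq r hr; exact ⟨s, hs, h hsA⟩

lemma subset_reg {A : Set (Col α)} (h : IsLowerSet A) : A ⊆ reg A :=
  fun q hq r hr => ⟨r, le_refl r, h hr hq⟩

lemma reg_reg (A : Set (Col α)) : reg (reg A) = reg A := by
  apply subset_antisymm _ (subset_reg (isLowerSet_reg A))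
  intro q hq r hr
  obtain ⟨s, hs, hsA⟩ := hq r hr
  obtain ⟨t, ht, htA⟩ := hsA s le_rfl
  exact ⟨t, ht.trans hs, htA⟩

lemma neg_reg {A : Set (Col α)} (h : IsLowerSet A) : neg (reg A) = neg A := by
  apply subset_antisymm
  · exact fun q hq r hr hrA => hq r hr (subset_reg h hrA)
  · intro q hq r hr hrreg
    obtain ⟨s, hsr, hsA⟩ := hrreg r le_rfl
    exact hq s (hsr.trans hr) hsA

lemma reg_neg {A : Set (Col α)} (h : IsLowerSet A) : reg (neg A) = neg A := by
  apply subset_antisymm _ (subset_reg (isLowerSet_neg A))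
  intro q hq r hr hrA
  obtain ⟨s, hsr, hsneg⟩ := hq r hr
  exact hsneg s le_rfl (h hsr hrA)

lemma reg_inter {A B : Set (Col α)} (hA : reg A = A) (hB : reg B = B) :
    reg (A ∩ B) = A ∩ B := by
  apply subset_antisymm
  · intro q hq
    exact ⟨hA ▸ reg_mono Set.inter_subset_left hq, hB ▸ reg_mono Set.inter_subset_right hq⟩
  · exact subset_reg ((hA ▸ isLowerSet_reg A).inter (hB ▸ isLowerSet_reg B))

lemma isOpen_iff {U : Set (Col α)} : IsOpen U ↔ IsLowerSet U := by
  constructor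
  · intro h
    induction h with
    | basic S hS => obtain ⟨p, rfl⟩ := hS; exact fun a b hba ha => le_trans hba ha
    | univ => exact isLowerSet_univ
    | inter S T _ _ ihS ihT => exact ihS.inter ihT
    | sUnion S _ ih => exact isLowerSet_sUnion ih
  · intro h
    have hU : U = ⋃₀ {S | ∃ p ∈ U, S = {q : Col α | q ≤ p}} := by
      apply subset_antisymm
      · exact fun q hq => ⟨{r | r ≤ q}, ⟨q, hq, rfl⟩, le_refl q⟩
      · rintro q ⟨S, ⟨p, hp, rfl⟩, hq⟩
        exact h hq hp
    rw [hU]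
    exact isOpen_sUnion (fun S hS => by
      obtain ⟨p, _, rfl⟩ := hS
      exact TopologicalSpace.isOpen_generateFrom_of_mem ⟨p, rfl⟩)

lemma interior_eq (A : Set (Col α)) : interior A = {q | ∀ r, r ≤ q → r ∈ A} := by
  apply subset_antisymm
  · exact fun q hq r hr => interior_subset ((isOpen_iff.mp isOpen_interior) hr hq)
  · exact interior_maximal (fun q hq => hq q le_rfl)
      (isOpen_iff.mpr (fun a b h ha r hr => ha r (hr.trans h)))

lemma closure_eq (A : Set (Col α)) : closure A = {q | ∃ s, s ≤ q ∧ s ∈ A} := by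
  apply subset_antisymm
  · refine closure_minimal (fun q hq => ⟨q, le_rfl, hq⟩) ?_
    rw [← isOpen_compl_iff]
    refine isOpen_iff.mpr (fun a b h ha hb => ha ?_)
    obtain ⟨s, hs, hsA⟩ := hb
    exact ⟨s, hs.trans h, hsA⟩
  · rintro q ⟨s, hs, hsA⟩
    by_contra hq
    have hopen : IsOpen (closure A)ᶜ := isOpen_compl_iff.mpr isClosed_closure
    exact (isOpen_iff.mp hopen hs hq) (subset_closure hsA)

lemma interior_closure_eq (A : Set (Col α)) : interior (closure A) = reg A := by
  rw [interior_eq, closure_eq]; rfl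

lemma regular_iff {A : Set (Col α)} : interior (closure A) = A ↔ reg A = A := by
  rw [interior_closure_eq]

/-- Constructor for regular open sets from the forcing characterization. -/
def mk' (A : Set (Col α)) (h : reg A = A) : RegOpen α := ⟨A, regular_iff.mpr h⟩

lemma reg_carrier (U : RegOpen α) : reg U.carrier = U.carrier := regular_iff.mp U.regular

lemma lower_carrier (U : RegOpen α) : IsLowerSet U.carrier :=
  (reg_carrier U) ▸ isLowerSet_reg _

lemma ext_carrier {U V : RegOpen α} (h : U.carrier = V.carrier) : U = V := by
  cases U; cases V; simpa using h

instance : PartialOrder (RegOpen α) where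
  le U V := U.carrier ⊆ V.carrier
  le_refl U := subset_rfl
  le_trans _ _ _ h1 h2 := Set.Subset.trans h1 h2
  le_antisymm U V h1 h2 := ext_carrier (subset_antisymm h1 h2)

lemma le_def {U V : RegOpen α} : U ≤ V ↔ U.carrier ⊆ V.carrier := Iff.rfl

instance : CompleteLattice (RegOpen α) where
  sup U V := mk' (reg (U.carrier ∪ V.carrier)) (reg_reg _)
  le_sup_left U V := by
    rw [le_def]; conv_lhs => rw [← reg_carrier U]
    exact reg_mono Set.subset_union_left
  le_sup_right U V := by
    rw [le_def]; conv_lhs => rw [← reg_carrier V]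
    exact reg_mono Set.subset_union_right
  sup_le U V W h1 h2 := by
    rw [le_def] at *
    rw [← reg_carrier W]
    exact reg_mono (Set.union_subset h1 h2)
  inf U V := mk' (U.carrier ∩ V.carrier) (reg_inter (reg_carrier U) (reg_carrier V))
  inf_le_left U V := le_def.mpr Set.inter_subset_left
  inf_le_right U V := le_def.mpr Set.inter_subset_right
  le_inf U V W h1 h2 := le_def.mpr (Set.subset_inter h1 h2)
  sSup T := mk' (reg (⋃₀ (RegOpen.carrier '' T))) (reg_reg _)
  isLUB_sSup T := ⟨fun U hU => by
    rw [le_def]; conv_lhs => rw [← reg_carrier U]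
    exact reg_mono (Set.subset_sUnion_of_mem ⟨U, hU, rfl⟩), fun U h => by
    rw [le_def, ← reg_carrier U]
    refine reg_mono (Set.sUnion_subset ?_)
    rintro A ⟨V, hV, rfl⟩
    exact h hV⟩
  sInf T := mk' (reg (⋂₀ (RegOpen.carrier '' T))) (reg_reg _)
  isGLB_sInf T := ⟨fun U hU => by
    rw [le_def]; conv_rhs => rw [← reg_carrier U]
    exact reg_mono (Set.sInter_subset_of_mem ⟨U, hU, rfl⟩), fun U h => by
    rw [le_def, ← reg_carrier U]
    refine reg_mono (Set.subset_sInter ?_)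
    rintro A ⟨V, hV, rfl⟩
    exact h hV⟩
  top := mk' Set.univ (subset_antisymm (Set.subset_univ _) (subset_reg isLowerSet_univ))
  le_top U := le_def.mpr (Set.subset_univ _)
  bot := mk' ∅ (subset_antisymm
    (fun q hq => by obtain ⟨s, _, hs⟩ := hq q le_rfl; exact hs.elim)
    (Set.empty_subset _))
  bot_le U := le_def.mpr (Set.empty_subset _)

@[simp] lemma carrier_inf (U V : RegOpen α) : (U ⊓ V).carrier = U.carrier ∩ V.carrier := rfl
@[simp] lemma carrier_sup (U V : RegOpen α) :
    (U ⊔ V).carrier = reg (U.carrier ∪ V.carrier) := rfl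
@[simp] lemma carrier_sSup (T : Set (RegOpen α)) :
    (sSup T).carrier = reg (⋃₀ (RegOpen.carrier '' T)) := rfl
@[simp] lemma carrier_sInf (T : Set (RegOpen α)) :
    (sInf T).carrier = reg (⋂₀ (RegOpen.carrier '' T)) := rfl
@[simp] lemma carrier_top : (⊤ : RegOpen α).carrier = Set.univ := rfl
@[simp] lemma carrier_bot : (⊥ : RegOpen α).carrier = ∅ := rfl


instance instCBA : CompleteBooleanAlgebra (RegOpen α) where
  __ := (inferInstance : CompleteLattice (RegOpen α))
  compl U := mk' (neg U.carrier) (reg_neg (lower_carrier U))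
  sdiff U V := mk' (U.carrier ∩ neg V.carrier)
    (reg_inter (reg_carrier U) (reg_neg (lower_carrier V)))
  himp U V := mk' (reg (V.carrier ∪ neg U.carrier)) (reg_reg _)
  sdiff_eq _ _ := rfl
  himp_eq _ _ := rfl
  inf_compl_le_bot U := le_def.mpr (fun q hq => absurd hq.1 (hq.2 q le_rfl))
  top_le_sup_compl U := by
    rw [le_def]
    intro q _ r hr
    by_cases h : ∃ s, s ≤ r ∧ s ∈ neg U.carrier
    · obtain ⟨s, hs, hsn⟩ := h
      exact ⟨s, hs, Or.inr hsn⟩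
    · push_neg at h
      have hrU : r ∈ reg U.carrier := by
        intro t ht
        rcases not_forall.mp (h t ht) with ⟨u, hu⟩
        rcases Classical.not_imp.mp hu with ⟨hut, huU⟩
        exact ⟨u, hut, not_not.mp huU⟩
      exact ⟨r, le_rfl, Or.inl ((reg_carrier U) ▸ hrU)⟩
  le_sup_inf U V W := by
    rw [le_def]
    rintro q ⟨h1, h2⟩ r hr
    obtain ⟨s, hsr, hs⟩ := h1 r hr
    rcases hs with hsU | hsV
    · exact ⟨s, hsr, Or.inl hsU⟩
    · have hs2 : s ∈ reg (U.carrier ∪ W.carrier) :=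
        isLowerSet_reg _ (hsr.trans hr) h2
      obtain ⟨t, hts, ht⟩ := hs2 s le_rfl
      rcases ht with htU | htW
      · exact ⟨t, hts.trans hsr, Or.inl htU⟩
      · exact ⟨t, hts.trans hsr, Or.inr ⟨lower_carrier V hts hsV, htW⟩⟩

@[simp] lemma carrier_compl (U : RegOpen α) : (Uᶜ).carrier = neg U.carrier := rfl


section Generation

lemma exists_unset (q : Col α) : ∃ m, q.toFun m = none := by
  obtain ⟨m, hm⟩ := (q.finite.infinite_compl).nonempty
  exact ⟨m, not_not.mp hm⟩

/-- Extend a condition at one coordinate. -/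
def extend (q : Col α) (n : ℕ) (a : α) : Col α :=
  ⟨fun m => if m = n then some a else q.toFun m, by
    apply Set.Finite.subset (q.finite.insert n)
    intro m hm
    simp only [Set.mem_insert_iff]
    by_cases h : m = n
    · exact Or.inl h
    · exact Or.inr (by simpa [h] using hm)⟩

lemma extend_le {q : Col α} {n : ℕ} (hn : q.toFun n = none) (a : α) : extend q n a ≤ q := by
  intro m b hm
  have hmn : m ≠ n := fun h => by rw [h, hn] at hm; cases hm
  show (if m = n then some a else q.toFun m) = some b
  rw [if_neg hmn]; exact hm

lemma extend_self (q : Col α) (n : ℕ) (a : α) : (extend q n a).toFun n = some a := if_pos rfl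

/-- The basic set `[[g(n) = a]]`. -/
def E (n : ℕ) (a : α) : Set (Col α) := {p | p.toFun n = some a}

lemma lower_E {n : ℕ} {a : α} : IsLowerSet (E (α := α) n a) :=
  fun _p q h hq => h n a hq

variable [Infinite α]

lemma exists_block (q : Col α) (n : ℕ) (a : α) (h : q.toFun n ≠ some a) :
    ∃ r, r ≤ q ∧ ∃ b, b ≠ a ∧ r.toFun n = some b := by
  cases hqn : q.toFun n with
  | some b => exact ⟨q, le_rfl, b, fun hb => h (hb ▸ hqn), hqn⟩
  | none =>
    obtain ⟨b, hb⟩ := exists_ne a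
    exact ⟨extend q n b, extend_le hqn b, b, hb, extend_self q n b⟩

lemma reg_E {n : ℕ} {a : α} : reg (E (α := α) n a) = E n a := by
  apply subset_antisymm _ (subset_reg lower_E)
  intro q hq
  by_contra hqE
  obtain ⟨r, hrq, b, hb, hrb⟩ := exists_block q n a hqE
  obtain ⟨s, hsr, hsE⟩ := hq r hrq
  exact hb (Option.some.inj ((hsr n b hrb).symm.trans hsE))

/-- `[[g(n) = a]]` as a regular open set. -/
def Ereg (n : ℕ) (a : α) : RegOpen α := mk' (E n a) reg_E

lemma reg_Odown (p : Col α) : reg {q : Col α | q ≤ p} = {q : Col α | q ≤ p} := by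
  apply subset_antisymm _ (subset_reg (fun _a b h ha => h.trans ha))
  intro q hq
  by_contra hqp
  have h' : ¬ ∀ (n : ℕ) (a : α), p.toFun n = some a → q.toFun n = some a := hqp
  push_neg at h'
  obtain ⟨n, a, hpn, hqn⟩ := h'
  obtain ⟨r, hrq, b, hb, hrb⟩ := exists_block q n a hqn
  obtain ⟨s, hsr, hsp⟩ := hq r hrq
  exact hb (Option.some.inj ((hsr n b hrb).symm.trans (hsp n a hpn)))

/-- The set forcing `g(m) ◁ g(k)`. -/
def Ltset (rel : α → α → Prop) (m k : ℕ) : Set (Col α) :=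
  {p | ∃ b c, p.toFun m = some b ∧ p.toFun k = some c ∧ rel b c}

/-- The generator `[[g(m) ◁ g(k)]]` as a regular open set. -/
def Wel (rel : α → α → Prop) (m k : ℕ) : RegOpen α := mk' (reg (Ltset rel m k)) (reg_reg _)

/-- The key combinatorial identity:
`[[g(n) = a]] = [[g(n) ⋫ a]] ⊓ ¬ ⨆ m [[g(m) ⊵ a ∧ g(m) ◁ g(n)]]`. -/
lemma key (rel : α → α → Prop) (htri : ∀ b c : α, b ≠ c → rel b c ∨ rel c b)
    (hirr : ∀ b : α, ¬ rel b b) (n : ℕ) (a : α) :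
    E (α := α) n a =
      neg {p : Col α | ∃ b, rel b a ∧ p.toFun n = some b} ∩
      neg (⋃ m : ℕ, (neg {p : Col α | ∃ b, rel b a ∧ p.toFun m = some b} ∩
        reg (Ltset rel m n))) := by
  apply subset_antisymm
  · intro q hq
    constructor
    · rintro r hr ⟨b, hba, hrn⟩
      have h1 : r.toFun n = some a := hr n a hq
      exact hirr a (Option.some.inj (hrn.symm.trans h1) ▸ hba)
    · intro r hr hmem
      rw [Set.mem_iUnion] at hmem
      obtain ⟨m, hGe, hLt⟩ := hmem
      obtain ⟨s, hsr, b, c, hsm, hsn, hbc⟩ := hLt r le_rfl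
      have hsa : s.toFun n = some a := (hsr.trans hr) n a hq
      have hca : c = a := Option.some.inj (hsn.symm.trans hsa)
      exact hGe s hsr ⟨b, hca ▸ hbc, hsm⟩
  · rintro q ⟨hGe, hB⟩
    show q.toFun n = some a
    by_contra hqn
    cases hqn' : q.toFun n with
    | some b =>
      have hba : ¬ rel b a := fun h => hGe q le_rfl ⟨b, h, hqn'⟩
      have hne : a ≠ b := fun h => hqn (h ▸ hqn')
      have hab : rel a b := (htri a b hne).resolve_right hba
      obtain ⟨m, hm⟩ := exists_unset q
      set r := extend q m a with hrdef
      have hrq : r ≤ q := extend_le hm a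
      have hrm : r.toFun m = some a := extend_self q m a
      have hrn : r.toFun n = some b := hrq n b hqn'
      refine hB r hrq (Set.mem_iUnion.mpr ⟨m, ?_, ?_⟩)
      · rintro t ht ⟨b', hb', htm⟩
        have h1 : t.toFun m = some a := ht m a hrm
        exact hirr a (Option.some.inj (htm.symm.trans h1) ▸ hb')
      · intro t ht
        exact ⟨t, le_rfl, a, b, ht m a hrm, ht n b hrn, hab⟩
    | none =>
      obtain ⟨b, hb⟩ := exists_ne a
      rcases htri b a hb with hba | hab
      · exact hGe (extend q n b) (extend_le hqn' b) ⟨b, hba, extend_self q n b⟩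
      · set r1 := extend q n b with hr1def
        have hr1q : r1 ≤ q := extend_le hqn' b
        have hr1n : r1.toFun n = some b := extend_self q n b
        obtain ⟨m, hm⟩ := exists_unset r1
        have hmn : m ≠ n := fun h => by rw [h, hr1n] at hm; cases hm
        set r := extend r1 m a with hrdef
        have hrr1 : r ≤ r1 := extend_le hm a
        have hrq : r ≤ q := hrr1.trans hr1q
        have hrm : r.toFun m = some a := extend_self r1 m a
        have hrn : r.toFun n = some b := hrr1 n b hr1n
        refine hB r hrq (Set.mem_iUnion.mpr ⟨m, ?_, ?_⟩)
        · rintro t ht ⟨b', hb', htm⟩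
          have h1 : t.toFun m = some a := ht m a hrm
          exact hirr a (Option.some.inj (htm.symm.trans h1) ▸ hb')
        · intro t ht
          exact ⟨t, le_rfl, a, b, ht m a hrm, ht n b hrn, hab⟩


variable (rel : α → α → Prop)

/-- The open set forcing `g(m) ◁ x`. -/
def Dset (x : α) (m : ℕ) : Set (Col α) := {p : Col α | ∃ b, rel b x ∧ p.toFun m = some b}

lemma lower_Dset (x : α) (m : ℕ) : IsLowerSet (Dset rel x m) := by
  rintro p q hpq ⟨b, hbx, hq⟩
  exact ⟨b, hbx, hpq m b hq⟩

/-- `[[g(m) ◁ x]]` as an element of the algebra. -/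
def Abig (x : α) (m : ℕ) : RegOpen α := sSup ((fun b => Ereg m b) '' {b | rel b x})

lemma carrier_Abig (x : α) (m : ℕ) : (Abig rel x m).carrier = reg (Dset rel x m) := by
  show reg (⋃₀ (RegOpen.carrier '' ((fun b => Ereg m b) '' {b | rel b x}))) = _
  refine congrArg reg ?_
  ext p
  simp only [Set.sUnion_image, Set.mem_image, Set.mem_iUnion, Set.mem_setOf_eq]
  constructor
  · rintro ⟨U, ⟨b, hb, rfl⟩, hp⟩
    exact ⟨b, hb, hp⟩
  · rintro ⟨b, hb, hp⟩
    exact ⟨Ereg m b, ⟨b, hb, rfl⟩, hp⟩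

lemma carrier_Abig_compl (x : α) (m : ℕ) :
    ((Abig rel x m)ᶜ).carrier = neg (Dset rel x m) := by
  rw [carrier_compl, carrier_Abig, neg_reg (lower_Dset rel x m)]

/-- `⨆ m [[g(m) ⊵ x ∧ g(m) ◁ g(n)]]` as an element of the algebra. -/
def Bbig (x : α) (n : ℕ) : RegOpen α :=
  sSup (Set.range fun m => (Abig rel x m)ᶜ ⊓ Wel rel m n)

lemma carrier_Bbig_compl (x : α) (n : ℕ) :
    ((Bbig rel x n)ᶜ).carrier =
      neg (⋃ m : ℕ, (neg (Dset rel x m) ∩ reg (Ltset rel m n))) := by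
  rw [carrier_compl]
  show neg (reg (⋃₀ (RegOpen.carrier '' Set.range fun m => (Abig rel x m)ᶜ ⊓ Wel rel m n))) = _
  rw [← Set.range_comp, Set.sUnion_range]
  have hU : (⋃ m : ℕ, (RegOpen.carrier ∘ fun m => (Abig rel x m)ᶜ ⊓ Wel rel m n) m)
      = ⋃ m : ℕ, (neg (Dset rel x m) ∩ reg (Ltset rel m n)) := by
    refine Set.iUnion_congr (fun m => ?_)
    show ((Abig rel x m)ᶜ ⊓ Wel rel m n).carrier = _
    rw [carrier_inf, carrier_Abig_compl]
    rfl
  rw [hU, neg_reg]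
  exact isLowerSet_iUnion (fun m => (isLowerSet_neg _).inter (isLowerSet_reg _))

lemma key' (htri : ∀ b c : α, b ≠ c → rel b c ∨ rel c b)
    (hirr : ∀ b : α, ¬ rel b b) (n : ℕ) (x : α) :
    Ereg n x = (Abig rel x n)ᶜ ⊓ (Bbig rel x n)ᶜ := by
  apply ext_carrier
  rw [carrier_inf, carrier_Abig_compl, carrier_Bbig_compl]
  exact key rel htri hirr n x

/-- The principal down-set as a regular open set. -/
def Odown (p : Col α) : RegOpen α := mk' {q : Col α | q ≤ p} (reg_Odown p)

lemma Odown_eq_sInf (p : Col α) :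
    Odown (α := α) p = sInf {U : RegOpen α | ∃ n a, p.toFun n = some a ∧ U = Ereg n a} := by
  apply ext_carrier
  rw [carrier_sInf]
  have h : ⋂₀ (RegOpen.carrier '' {U : RegOpen α | ∃ n a, p.toFun n = some a ∧ U = Ereg n a})
      = {q : Col α | q ≤ p} := by
    ext q
    simp only [Set.mem_sInter, Set.mem_image, Set.mem_setOf_eq]
    constructor
    · intro h n a hpa
      exact h (E n a) ⟨Ereg n a, ⟨n, a, hpa, rfl⟩, rfl⟩
    · rintro h A ⟨U, ⟨n, a, hpa, rfl⟩, rfl⟩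
      exact h n a hpa
  rw [h, reg_Odown]
  rfl

lemma eq_sSup_Odown (U : RegOpen α) :
    U = sSup {V : RegOpen α | ∃ p ∈ U.carrier, V = Odown p} := by
  apply ext_carrier
  rw [carrier_sSup]
  have h : ⋃₀ (RegOpen.carrier '' {V : RegOpen α | ∃ p ∈ U.carrier, V = Odown p})
      = U.carrier := by
    ext q
    constructor
    · rintro ⟨A, ⟨V, ⟨p, hp, rfl⟩, rfl⟩, hq⟩
      exact lower_carrier U hq hp
    · intro hq
      exact ⟨{r : Col α | r ≤ q}, ⟨Odown q, ⟨q, hq, rfl⟩, rfl⟩, le_refl q⟩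
  rw [h, reg_carrier]

end Generation

end ColRO


/-- A subset `S` of a complete Boolean algebra `B` is a *complete Boolean subalgebra*
if it contains `⊥` and `⊤`, and is closed under complementation and under
arbitrary suprema and infima. -/
def IsCompleteSubalgebra {B : Type u} [CompleteBooleanAlgebra B] (S : Set B) : Prop :=
  ⊥ ∈ S ∧ ⊤ ∈ S ∧ (∀ b ∈ S, bᶜ ∈ S) ∧
    (∀ T : Set B, T ⊆ S → sSup T ∈ S) ∧ (∀ T : Set B, T ⊆ S → sInf T ∈ S)

/-- A complete Boolean algebra `B` is *countably generated* if there is a countable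
subset `X ⊆ B` such that the only complete Boolean subalgebra of `B` containing `X`
is `B` itself. -/
def CountablyGeneratedCBA (B : Type u) [CompleteBooleanAlgebra B] : Prop :=
  ∃ X : Set B, X.Countable ∧
    ∀ S : Set B, IsCompleteSubalgebra S → X ⊆ S → S = Set.univ

/-- For every infinite cardinal `κ`, the regular open algebra `R.O.(Col(ω, κ))`
(a complete Boolean algebra under inclusion) is countably generated. -/
theorem regularOpenAlgebra_collapse_countably_generated (κ : Cardinal.{u})
    (hκ : Cardinal.aleph0 ≤ κ) (α : Type u) (hα : #α = κ) :
    ∃ inst : CompleteBooleanAlgebra (RegOpen α),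
      (∀ U V : RegOpen α, inst.le U V ↔ U.carrier ⊆ V.carrier) ∧
      @CountablyGeneratedCBA (RegOpen α) inst := by
  haveI : Infinite α := Cardinal.infinite_iff.mpr (hα ▸ hκ)
  refine ⟨ColRO.instCBA, fun U V => Iff.rfl, ?_⟩
  classical
  set rel := WellOrderingRel (α := α) with hrel
  have htri : ∀ b c : α, b ≠ c → rel b c ∨ rel c b := by
    intro b c h
    rcases trichotomous_of rel b c with h1 | h1 | h1
    · exact Or.inl h1
    · exact absurd h1 h
    · exact Or.inr h1
  have hirr : ∀ b : α, ¬ rel b b := fun b hb =>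
    (IsWellFounded.wf (r := rel)).asymmetric b b hb hb
  refine ⟨Set.range (fun mk : ℕ × ℕ => ColRO.Wel rel mk.1 mk.2), Set.countable_range _, ?_⟩
  intro S hS hXS
  obtain ⟨hbot, htop, hcompl, hsSup, hsInf⟩ := hS
  have hinf : ∀ x y : RegOpen α, x ∈ S → y ∈ S → x ⊓ y ∈ S := by
    intro x y hx hy
    have h := hsInf {x, y} (by rintro z (rfl | rfl) <;> assumption)
    rwa [sInf_pair] at h
  -- Step 1: every `[[g(n) = a]]` belongs to `S`.
  have hE : ∀ a : α, ∀ n : ℕ, ColRO.Ereg n a ∈ S := by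
    intro a
    refine IsWellFounded.induction rel (motive := fun y => ∀ n : ℕ, ColRO.Ereg n y ∈ S) a ?_
    intro x IH n
    have hAS : ∀ m : ℕ, ColRO.Abig rel x m ∈ S := fun m =>
      hsSup _ (by rintro _ ⟨b, hb, rfl⟩; exact IH b hb m)
    have hBS : ColRO.Bbig rel x n ∈ S := hsSup _ (by
      rintro _ ⟨m, rfl⟩
      exact hinf _ _ (hcompl _ (hAS m)) (hXS ⟨(m, n), rfl⟩))
    rw [ColRO.key' rel htri hirr n x]
    exact hinf _ _ (hcompl _ (hAS n)) (hcompl _ hBS)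
  -- Step 2: every principal down-set belongs to `S`.
  have hO : ∀ p : Col α, ColRO.Odown p ∈ S := by
    intro p
    rw [ColRO.Odown_eq_sInf]
    exact hsInf _ (by rintro U ⟨n, b, hpn, rfl⟩; exact hE b n)
  -- Step 3: every regular open set belongs to `S`.
  apply Set.eq_univ_of_forall
  intro U
  rw [ColRO.eq_sSup_Odown U]
  exact hsSup _ (by rintro V ⟨p, hp, rfl⟩; exact hO p)
end

section
/- For every cardinal λ there exists an atomless complete Boolean algebra B that is countably generated and has cardinality at least λ. -/
universe u

open Cardinal

/-- A complete Boolean algebra is *atomless* if below every nonzero element there is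
a strictly smaller nonzero element. -/
def AtomlessCBA (B : Type u) [CompleteBooleanAlgebra B] : Prop :=
  ∀ b : B, ⊥ < b → ∃ c : B, ⊥ < c ∧ c < b

set_option linter.unusedSectionVars false

namespace GH

variable {K : Type u}

/-- Points of the space: functions `ℕ → K`. -/
abbrev Pt (K : Type u) := ℕ → K

/-- Basic cylinder: points agreeing with `f` on `F`. -/
def Cyl (f : Pt K) (F : Finset ℕ) : Set (Pt K) := {g | ∀ i ∈ F, g i = f i}

theorem mem_Cyl_self (f : Pt K) (F : Finset ℕ) : f ∈ Cyl f F := fun _ _ => rfl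

theorem Cyl_eq_of_mem {f g : Pt K} {F : Finset ℕ} (h : g ∈ Cyl f F) : Cyl g F = Cyl f F := by
  ext x; constructor <;> intro hx i hi
  · rw [hx i hi, h i hi]
  · rw [hx i hi, h i hi]

theorem Cyl_anti {f : Pt K} {F F' : Finset ℕ} (h : F ⊆ F') : Cyl f F' ⊆ Cyl f F :=
  fun _ hg i hi => hg i (h hi)

/-- Closure. -/
def cls (A : Set (Pt K)) : Set (Pt K) := {f | ∀ F : Finset ℕ, (Cyl f F ∩ A).Nonempty}

/-- Interior. -/
def itr (A : Set (Pt K)) : Set (Pt K) := {f | ∃ F : Finset ℕ, Cyl f F ⊆ A}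

/-- Regularization: interior of closure. -/
def reg (A : Set (Pt K)) : Set (Pt K) := itr (cls A)

/-- Openness. -/
def Opn (A : Set (Pt K)) : Prop := ∀ f ∈ A, ∃ F : Finset ℕ, Cyl f F ⊆ A

theorem itr_subset (A : Set (Pt K)) : itr A ⊆ A :=
  fun f ⟨F, hF⟩ => hF (mem_Cyl_self f F)

theorem subset_cls (A : Set (Pt K)) : A ⊆ cls A :=
  fun f hf F => ⟨f, mem_Cyl_self f F, hf⟩

theorem itr_mono {A B : Set (Pt K)} (h : A ⊆ B) : itr A ⊆ itr B :=
  fun _ ⟨F, hF⟩ => ⟨F, hF.trans h⟩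

theorem cls_mono {A B : Set (Pt K)} (h : A ⊆ B) : cls A ⊆ cls B :=
  fun _ hf F => ((hf F).imp fun _ ⟨h1, h2⟩ => ⟨h1, h h2⟩)

theorem reg_mono {A B : Set (Pt K)} (h : A ⊆ B) : reg A ⊆ reg B :=
  itr_mono (cls_mono h)

theorem opn_itr (A : Set (Pt K)) : Opn (itr A) := by
  rintro f ⟨F, hF⟩
  exact ⟨F, fun g hg => ⟨F, (Cyl_eq_of_mem hg).le.trans hF⟩⟩

theorem Opn.subset_itr {A : Set (Pt K)} (h : Opn A) : A ⊆ itr A := fun f hf => h f hf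

theorem Opn.subset_reg {A : Set (Pt K)} (h : Opn A) : A ⊆ reg A := fun f hf => by
  obtain ⟨F, hF⟩ := h f hf
  exact ⟨F, hF.trans (subset_cls A)⟩

theorem opn_reg (A : Set (Pt K)) : Opn (reg A) := opn_itr _

theorem cls_cls (A : Set (Pt K)) : cls (cls A) = cls A := by
  refine le_antisymm ?_ (subset_cls _)
  intro f hf F
  obtain ⟨g, hg1, hg2⟩ := hf F
  obtain ⟨h, hh1, hh2⟩ := hg2 F
  exact ⟨h, fun i hi => (hh1 i hi).trans (hg1 i hi), hh2⟩

theorem reg_reg (A : Set (Pt K)) : reg (reg A) = reg A := by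
  refine le_antisymm ?_ (opn_reg A).subset_reg
  have : cls (reg A) ⊆ cls A := by
    have h1 : reg A ⊆ cls A := (itr_subset _)
    simpa [cls_cls] using cls_mono h1
  exact itr_mono this

theorem opn_inter {A B : Set (Pt K)} (hA : Opn A) (hB : Opn B) : Opn (A ∩ B) := by
  rintro f ⟨hfA, hfB⟩
  obtain ⟨F, hF⟩ := hA f hfA
  obtain ⟨G, hG⟩ := hB f hfB
  exact ⟨F ∪ G, fun g hg => ⟨hF (fun i hi => hg i (Finset.mem_union_left _ hi)),
    hG (fun i hi => hg i (Finset.mem_union_right _ hi))⟩⟩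

theorem opn_biUnion {ι : Sort*} {p : ι → Prop} {A : ι → Set (Pt K)}
    (h : ∀ i, p i → Opn (A i)) : Opn (⋃ i, ⋃ (_ : p i), A i) := by
  intro f hf
  simp only [Set.mem_iUnion] at hf
  obtain ⟨i, hi, hfi⟩ := hf
  obtain ⟨F, hF⟩ := h i hi f hfi
  exact ⟨F, hF.trans (by intro x hx; simp only [Set.mem_iUnion]; exact ⟨i, hi, hx⟩)⟩

/-- Key "frame" lemma: open sets distribute into the regularization. -/
theorem inter_cls_subset {U A : Set (Pt K)} (hU : Opn U) : U ∩ cls A ⊆ cls (U ∩ A) := by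
  rintro f ⟨hfU, hfA⟩ F
  obtain ⟨G, hG⟩ := hU f hfU
  obtain ⟨g, hg1, hg2⟩ := hfA (F ∪ G)
  exact ⟨g, fun i hi => hg1 i (Finset.mem_union_left _ hi),
    hG (fun i hi => hg1 i (Finset.mem_union_right _ hi)), hg2⟩

theorem inter_reg_subset {U A : Set (Pt K)} (hU : Opn U) : U ∩ reg A ⊆ reg (U ∩ A) := by
  rintro f ⟨hfU, F, hF⟩
  obtain ⟨G, hG⟩ := hU f hfU
  refine ⟨F ∪ G, fun g hg => inter_cls_subset hU ⟨hG (fun i hi => hg i (Finset.mem_union_right _ hi)), hF (fun i hi => hg i (Finset.mem_union_left _ hi))⟩⟩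

theorem itr_compl_eq (A : Set (Pt K)) : itr Aᶜ = (cls A)ᶜ := by
  ext f
  constructor
  · rintro ⟨F, hF⟩ hf
    obtain ⟨g, hg1, hg2⟩ := hf F
    exact hF hg1 hg2
  · intro h
    simp only [cls, Set.mem_compl_iff, Set.mem_setOf_eq, not_forall] at h
    obtain ⟨F, hF⟩ := h
    refine ⟨F, fun g hg hgA => hF ⟨g, hg, hgA⟩⟩

/-- Regularity of the "exterior" of a regular set. -/
theorem reg_itr_compl {A : Set (Pt K)} (hA : reg A = A) : reg (itr Aᶜ) = itr Aᶜ := by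
  refine le_antisymm ?_ (opn_itr _).subset_reg
  rintro f ⟨F, hF⟩
  rw [itr_compl_eq]
  by_contra hfc
  simp only [Set.mem_compl_iff, not_not] at hfc
  obtain ⟨g, hg1, hg2⟩ := hfc F
  have hg2' : g ∈ reg A := by rw [hA]; exact hg2
  obtain ⟨G, hG⟩ := hg2' 
  have hgE : g ∈ cls (itr Aᶜ) := ((Cyl_eq_of_mem hg1).le.trans hF) (mem_Cyl_self g F)
  obtain ⟨h, hh1, hh2⟩ := hgE G
  rw [itr_compl_eq] at hh2
  exact hh2 (hG hh1)

/-- The regular open algebra of `ℕ → K`. -/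
def RO (K : Type u) := {A : Set (Pt K) // reg A = A}

namespace RO

theorem opn (a : RO K) : Opn a.val := by
  have := a.2
  rw [← this]
  exact opn_reg _

instance : CompleteLattice (RO K) where
  le a b := a.val ⊆ b.val
  le_refl a := subset_rfl
  le_trans a b c := Set.Subset.trans
  le_antisymm a b h h' := Subtype.ext (le_antisymm h h')
  sup a b := ⟨reg (a.val ∪ b.val), reg_reg _⟩
  le_sup_left a b := ((a.opn.subset_reg).trans (reg_mono Set.subset_union_left) : _)
  le_sup_right a b := ((b.opn.subset_reg).trans (reg_mono Set.subset_union_right) : _)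
  sup_le a b c ha hb :=
    ((reg_mono (Set.union_subset ha hb)).trans c.2.le : _)
  inf a b := ⟨a.val ∩ b.val, le_antisymm
    (Set.subset_inter ((reg_mono Set.inter_subset_left).trans a.2.le)
      ((reg_mono Set.inter_subset_right).trans b.2.le))
    (opn_inter a.opn b.opn).subset_reg⟩
  inf_le_left a b := (Set.inter_subset_left : _)
  inf_le_right a b := (Set.inter_subset_right : _)
  le_inf a b c := Set.subset_inter
  top := ⟨Set.univ, le_antisymm (le_top) (by
    intro f _
    exact ⟨∅, fun g _ => fun F => ⟨g, mem_Cyl_self g F, trivial⟩⟩)⟩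
  bot := ⟨∅, le_antisymm (by
    rintro f ⟨F, hF⟩
    obtain ⟨g, _, hg⟩ := hF (mem_Cyl_self f F) ∅
    exact hg) (by simp)⟩
  le_top a := (Set.subset_univ _ : _)
  bot_le a := (Set.empty_subset _ : _)
  sSup T := ⟨reg (⋃ a ∈ T, a.val), reg_reg _⟩
  isLUB_sSup T := by
    refine ⟨fun a ha => ?_, fun a ha => ?_⟩
    · show a.val ⊆ reg _
      refine subset_trans ?_ (opn_biUnion (fun (b : RO K) (_ : b ∈ T) => b.opn)).subset_reg
      intro f hf
      exact Set.mem_biUnion ha hf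
    · show reg _ ⊆ a.val
      have ha' : ∀ b ∈ T, b.val ⊆ a.val := fun b hb => ha hb
      exact (reg_mono (Set.iUnion₂_subset ha')).trans a.2.le
  sInf T := ⟨reg (itr (⋂ a ∈ T, a.val)), reg_reg _⟩
  isGLB_sInf T := by
    refine ⟨fun a ha => ?_, fun a ha => ?_⟩
    · exact ((reg_mono ((itr_subset _).trans (Set.biInter_subset_of_mem ha))).trans a.2.le : _)
    · show a.val ⊆ reg _
      refine subset_trans ?_ (opn_itr _).subset_reg
      intro f hf
      obtain ⟨F, hF⟩ := a.opn f hf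
      exact ⟨F, hF.trans (by
        intro g hg
        exact Set.mem_iInter₂.2 fun b hb => ha hb hg)⟩

instance : Compl (RO K) := ⟨fun a => ⟨itr a.valᶜ, reg_itr_compl a.2⟩⟩

variable {a b c : RO K} {T : Set (RO K)}

theorem le_def : a ≤ b ↔ a.val ⊆ b.val := Iff.rfl
theorem val_sup : (a ⊔ b).val = reg (a.val ∪ b.val) := rfl
theorem val_inf : (a ⊓ b).val = a.val ∩ b.val := rfl
theorem val_top : (⊤ : RO K).val = Set.univ := rfl
theorem val_bot : (⊥ : RO K).val = ∅ := rfl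
theorem val_compl : (aᶜ).val = itr a.valᶜ := rfl
theorem val_sSup : (sSup T).val = reg (⋃ a ∈ T, a.val) := rfl
theorem val_sInf : (sInf T).val = reg (itr (⋂ a ∈ T, a.val)) := rfl

theorem le_sup_inf' (a b c : RO K) : (a ⊔ b) ⊓ (a ⊔ c) ≤ a ⊔ b ⊓ c := by
  rw [le_def, val_inf, val_sup, val_sup, val_sup, val_inf]
  have step1 : reg (a.val ∪ b.val) ∩ reg (a.val ∪ c.val) ⊆
      reg (reg (a.val ∪ b.val) ∩ (a.val ∪ c.val)) :=
    inter_reg_subset (opn_reg _)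
  refine step1.trans ?_
  have step2 : reg (a.val ∪ b.val) ∩ (a.val ∪ c.val) ⊆ reg (a.val ∪ b.val ∩ c.val) := by
    rintro f ⟨hf1, hf2⟩
    rcases hf2 with hfa | hfc
    · have hopn : Opn (a.val ∪ b.val ∩ c.val) := fun g hg => by
        rcases hg with hg | hg
        · obtain ⟨F, hF⟩ := a.opn g hg
          exact ⟨F, hF.trans Set.subset_union_left⟩
        · obtain ⟨F, hF⟩ := (opn_inter b.opn c.opn) g hg
          exact ⟨F, hF.trans Set.subset_union_right⟩
      exact hopn.subset_reg (Or.inl hfa)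
    · have : f ∈ reg ((a.val ∪ b.val) ∩ c.val) := by
        rw [Set.inter_comm]
        exact inter_reg_subset c.opn ⟨hfc, hf1⟩
      refine (reg_mono ?_) this
      rintro g ⟨hg1 | hg1, hg2⟩
      · exact Or.inl hg1
      · exact Or.inr ⟨hg1, hg2⟩
  have := reg_mono step2
  rwa [reg_reg] at this

theorem inf_compl_le_bot' (a : RO K) : a ⊓ aᶜ ≤ ⊥ := by
  rw [le_def, val_inf, val_compl, val_bot]
  rintro f ⟨hf1, hf2⟩
  exact (itr_subset _ hf2) hf1

theorem top_le_sup_compl' (a : RO K) : ⊤ ≤ a ⊔ aᶜ := by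
  rw [le_def, val_top, val_sup, val_compl]
  intro f _
  refine ⟨∅, fun g _ F => ?_⟩
  by_cases h : (Cyl g F ∩ a.val).Nonempty
  · obtain ⟨h', hh1, hh2⟩ := h
    exact ⟨h', hh1, Or.inl hh2⟩
  · rw [Set.not_nonempty_iff_eq_empty] at h
    refine ⟨g, mem_Cyl_self g F, Or.inr ⟨F, fun x hx hxa => ?_⟩⟩
    exact Set.eq_empty_iff_forall_notMem.1 h x ⟨hx, hxa⟩

theorem inf_sSup_le' (a : RO K) (s : Set (RO K)) : a ⊓ sSup s ≤ ⨆ b ∈ s, a ⊓ b := by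
  have key : ∀ b ∈ s, a ⊓ b ≤ ⨆ b ∈ s, a ⊓ b := fun b hb => le_iSup₂ (f := fun b _ => a ⊓ b) b hb
  rw [le_def, val_inf, val_sSup]
  refine (inter_reg_subset a.opn).trans ?_
  rw [← (⨆ b ∈ s, a ⊓ b).2]
  refine reg_mono ?_
  rintro f ⟨hfa, hfU⟩
  simp only [Set.mem_iUnion] at hfU
  obtain ⟨b, hb, hfb⟩ := hfU
  exact (le_def.1 (key b hb)) ⟨hfa, hfb⟩

theorem le_sup_sInf' (a : RO K) (s : Set (RO K)) : ⨅ b ∈ s, a ⊔ b ≤ a ⊔ sInf s := by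
  set c := ⨅ b ∈ s, a ⊔ b with hc
  have claim1 : c ⊓ aᶜ ≤ sInf s := by
    refine le_sInf fun b hb => ?_
    have h1 : c ≤ a ⊔ b := iInf₂_le (f := fun b _ => a ⊔ b) b hb
    have h2 : (a ⊔ b) ⊓ aᶜ ≤ b := by
      rw [le_def, val_inf, val_sup, val_compl, Set.inter_comm]
      refine (inter_reg_subset (opn_itr _)).trans ((reg_mono ?_).trans b.2.le)
      rintro f ⟨hf1, hf2 | hf2⟩
      · exact absurd hf2 (itr_subset _ hf1)
      · exact hf2
    exact le_trans (inf_le_inf_right _ h1) h2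
  have claim2 : c ≤ a ⊔ c ⊓ aᶜ := by
    rw [le_def, val_sup, val_inf, val_compl]
    intro f hf
    obtain ⟨F, hF⟩ := c.opn f hf
    refine ⟨F, fun g hg G => ?_⟩
    by_cases h : (Cyl g (G ∪ F) ∩ a.val).Nonempty
    · obtain ⟨x, hx1, hx2⟩ := h
      exact ⟨x, fun i hi => hx1 i (Finset.mem_union_left _ hi), Or.inl hx2⟩
    · rw [Set.not_nonempty_iff_eq_empty] at h
      refine ⟨g, mem_Cyl_self g G, Or.inr ⟨hF ((Cyl_eq_of_mem hg) ▸ mem_Cyl_self g F), ?_⟩⟩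
      exact ⟨G ∪ F, fun x hx hxa => Set.eq_empty_iff_forall_notMem.1 h x ⟨hx, hxa⟩⟩
  exact claim2.trans (sup_le_sup_left claim1 _)

instance : CompleteBooleanAlgebra (RO K) where
  __ := (inferInstance : CompleteLattice (RO K))
  __ := (inferInstance : Compl (RO K))
  le_sup_inf := le_sup_inf'
  inf_compl_le_bot := inf_compl_le_bot'
  top_le_sup_compl := top_le_sup_compl'

end RO
variable {K : Type u}
theorem itr_eq_of_opn {A : Set (Pt K)} (h : Opn A) : itr A = A :=
  le_antisymm (itr_subset A) h.subset_itr

theorem reg_of_finDep (F : Finset ℕ) (A : Set (Pt K))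
    (h : ∀ f g : Pt K, (∀ i ∈ F, g i = f i) → f ∈ A → g ∈ A) : reg A = A := by
  have hopn : Opn A := fun f hf => ⟨F, fun g hg => h f g hg hf⟩
  have hcls : cls A = A := by
    refine le_antisymm ?_ (subset_cls A)
    intro f hf
    obtain ⟨g, hg1, hg2⟩ := hf F
    exact h g f (fun i hi => (hg1 i hi).symm) hg2
  rw [reg, hcls, itr_eq_of_opn hopn]

variable [LinearOrder K]

/-- The basic clopen set determined by one coordinate. -/
def Cset (n : ℕ) (A : Set K) : RO K :=
  ⟨{f | f n ∈ A}, reg_of_finDep {n} _ (by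
    intro f g hg hf
    show g n ∈ A
    rw [hg n (Finset.mem_singleton_self n)]
    exact hf)⟩

theorem mem_Cset {f : Pt K} {n : ℕ} {A : Set K} : f ∈ (Cset n A).val ↔ f n ∈ A := Iff.rfl

/-- The generators: `{f | f m < f n}`. -/
def eRO (m n : ℕ) : RO K :=
  ⟨{f | f m < f n}, reg_of_finDep {m, n} _ (by
    intro f g hg hf
    show g m < g n
    rw [hg m (by simp), hg n (by simp)]
    exact hf)⟩

/-- Cylinders as regular open sets. -/
def cylRO (g : Pt K) (F : Finset ℕ) : RO K :=
  ⟨Cyl g F, reg_of_finDep F _ (by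
    intro f f' hf' hf i hi
    rw [hf' i hi]
    exact hf i hi)⟩

theorem Cset_compl (n : ℕ) (A : Set K) : (Cset n A)ᶜ = Cset n Aᶜ := by
  refine Subtype.ext ?_
  show itr ({f : Pt K | f n ∈ A}ᶜ) = {f : Pt K | f n ∈ Aᶜ}
  have : ({f : Pt K | f n ∈ A}ᶜ) = {f : Pt K | f n ∈ Aᶜ} := rfl
  rw [this]
  exact itr_eq_of_opn (Cset n Aᶜ).opn

theorem Cset_inf (n : ℕ) (A B : Set K) : Cset n A ⊓ Cset n B = Cset n (A ∩ B) :=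
  Subtype.ext rfl

theorem mem_of_mem_inf {S : Set (RO K)} (hS : IsCompleteSubalgebra S) {a b : RO K}
    (ha : a ∈ S) (hb : b ∈ S) : a ⊓ b ∈ S := by
  have := hS.2.2.2.2 {a, b} (by rintro x (rfl | rfl) <;> assumption)
  rwa [sInf_pair] at this

theorem sSup_Iio (n : ℕ) (α : K) :
    sSup ((fun β => Cset n {β}) '' Set.Iio α) = Cset n (Set.Iio α) := by
  refine Subtype.ext ?_
  show reg _ = _
  have hU : (⋃ a ∈ (fun β => Cset n {β}) '' Set.Iio α, a.val) = (Cset n (Set.Iio α)).val := by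
    ext f
    simp only [Set.mem_iUnion, Set.mem_image, exists_prop]
    constructor
    · rintro ⟨a, ⟨β, hβ, rfl⟩, hf⟩
      have : f n = β := hf
      rw [mem_Cset, this]
      exact hβ
    · intro hf
      exact ⟨Cset n {f n}, ⟨f n, hf, rfl⟩, rfl⟩
  rw [hU]
  exact (Cset n (Set.Iio α)).2

theorem sSup_Ioi (n : ℕ) (α : K) :
    sSup (Set.range (fun m => Cset m (Set.Ici α) ⊓ eRO m n)) = Cset n (Set.Ioi α) := by
  refine Subtype.ext ?_
  show reg (⋃ a ∈ Set.range (fun m => Cset m (Set.Ici α) ⊓ eRO m n), a.val) = _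
  rw [Set.biUnion_range]
  have hW : (⋃ m, ((Cset m (Set.Ici α) ⊓ eRO m n : RO K)).val) =
      ⋃ m, ({f : Pt K | α ≤ f m ∧ f m < f n}) := by
    simp only [RO.val_inf]
    rfl
  rw [hW]
  set W : Set (Pt K) := ⋃ m, {f : Pt K | α ≤ f m ∧ f m < f n} with hWdef
  refine le_antisymm ?_ ?_
  · -- reg W ⊆ Cset n (Ioi α)
    have h1 : W ⊆ (Cset n (Set.Ioi α)).val := by
      intro f hf
      simp only [hWdef, Set.mem_iUnion, Set.mem_setOf_eq] at hf
      obtain ⟨m, hm1, hm2⟩ := hf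
      exact lt_of_le_of_lt hm1 hm2
    calc reg W ⊆ reg (Cset n (Set.Ioi α)).val := reg_mono h1
    _ = _ := (Cset n (Set.Ioi α)).2
  · -- Cset n (Ioi α) ⊆ reg W
    intro f hf
    refine ⟨{n}, fun g hg G => ?_⟩
    have hgn : α < g n := by
      rw [hg n (Finset.mem_singleton_self n)]
      exact hf
    obtain ⟨m, hm⟩ := Infinite.exists_notMem_finset (insert n G)
    have hmn : m ≠ n := fun h => hm (by simp [h])
    have hmG : m ∉ G := fun h => hm (by simp [h])
    refine ⟨Function.update g m α, fun i hi => Function.update_of_ne (by rintro rfl; exact hmG hi) _ _, ?_⟩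
    simp only [hWdef, Set.mem_iUnion, Set.mem_setOf_eq]
    refine ⟨m, ?_, ?_⟩
    · rw [Function.update_self]
    · rw [Function.update_self, Function.update_of_ne hmn.symm]
      exact hgn
variable [WellFoundedLT K]

theorem singletons_mem {S : Set (RO K)} (hS : IsCompleteSubalgebra S)
    (hX : ∀ m n : ℕ, eRO m n ∈ S) : ∀ (α : K) (n : ℕ), Cset n {α} ∈ S := by
  intro α
  induction α using WellFoundedLT.induction with
  | _ α IH =>
    intro n
    have hIio : ∀ m : ℕ, Cset m (Set.Iio α) ∈ S := by
      intro m
      have := hS.2.2.2.1 ((fun β => Cset m {β}) '' Set.Iio α)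
        (by rintro x ⟨β, hβ, rfl⟩; exact IH β hβ m)
      rwa [sSup_Iio] at this
    have hIci : ∀ m : ℕ, Cset m (Set.Ici α) ∈ S := by
      intro m
      have := hS.2.2.1 _ (hIio m)
      rwa [Cset_compl, Set.compl_Iio] at this
    have hIoi : Cset n (Set.Ioi α) ∈ S := by
      have := hS.2.2.2.1 (Set.range fun m => Cset m (Set.Ici α) ⊓ eRO m n)
        (by rintro x ⟨m, rfl⟩; exact mem_of_mem_inf hS (hIci m) (hX m n))
      rwa [sSup_Ioi] at this
    have h3 := mem_of_mem_inf hS (hS.2.2.1 _ hIoi) (hS.2.2.1 _ (hIio n))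
    rw [Cset_compl, Cset_compl, Cset_inf] at h3
    have hset : (Set.Ioi α)ᶜ ∩ (Set.Iio α)ᶜ = ({α} : Set K) := by
      ext x
      simp only [Set.mem_inter_iff, Set.mem_compl_iff, Set.mem_Ioi, Set.mem_Iio, not_lt,
        Set.mem_singleton_iff]
      constructor
      · rintro ⟨h1, h2⟩; exact le_antisymm h1 h2
      · rintro rfl; exact ⟨le_rfl, le_rfl⟩
    rwa [hset] at h3

theorem sInf_cyl (g : Pt K) (F : Finset ℕ) :
    sInf ((fun i => Cset i {g i}) '' (F : Set ℕ)) = cylRO g F := by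
  refine Subtype.ext ?_
  show reg (itr (⋂ a ∈ (fun i => Cset i {g i}) '' (F : Set ℕ), a.val)) = Cyl g F
  have hI : (⋂ a ∈ (fun i => Cset i {g i}) '' (F : Set ℕ), a.val) = Cyl g F := by
    ext f
    simp only [Set.mem_iInter]
    constructor
    · intro h i hi
      exact h (Cset i {g i}) (Set.mem_image_of_mem _ hi)
    · rintro h a ⟨i, hi, rfl⟩
      exact h i hi
  have h2 : itr (Cyl g F) = Cyl g F := itr_eq_of_opn (show Opn (Cyl g F) from (cylRO g F).opn)
  rw [hI, h2]
  exact (cylRO g F).2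

theorem cyl_mem {S : Set (RO K)} (hS : IsCompleteSubalgebra S)
    (hsingle : ∀ (α : K) (n : ℕ), Cset n {α} ∈ S) (g : Pt K) (F : Finset ℕ) :
    cylRO g F ∈ S := by
  have := hS.2.2.2.2 ((fun i => Cset i {g i}) '' (F : Set ℕ))
    (by rintro x ⟨i, hi, rfl⟩; exact hsingle (g i) i)
  rwa [sInf_cyl] at this

theorem gen_univ {S : Set (RO K)} (hS : IsCompleteSubalgebra S)
    (hX : ∀ m n : ℕ, eRO m n ∈ S) : S = Set.univ := by
  refine Set.eq_univ_iff_forall.2 fun b => ?_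
  have hsingle := singletons_mem hS hX
  set T : Set (RO K) := {d : RO K | d ≤ b ∧ ∃ g F, d = cylRO g F} with hT
  have hTS : T ⊆ S := by
    rintro d ⟨_, g, F, rfl⟩
    exact cyl_mem hS hsingle g F
  have hsup : sSup T = b := by
    refine Subtype.ext ?_
    show reg (⋃ d ∈ T, d.val) = b.val
    refine le_antisymm ?_ ?_
    · refine (reg_mono (Set.iUnion₂_subset fun d hd => hd.1)).trans b.2.le
    · intro f hf
      obtain ⟨F, hF⟩ := b.opn f hf
      have hd : cylRO f F ∈ T := ⟨hF, f, F, rfl⟩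
      have : f ∈ ⋃ d ∈ T, (d : RO K).val := Set.mem_biUnion hd (mem_Cyl_self f F)
      exact (opn_biUnion fun (d : RO K) (_ : d ∈ T) => d.opn).subset_reg this
  rw [← hsup]
  exact hS.2.2.2.1 T hTS

theorem Cset_zero_injective : Function.Injective (fun α : K => Cset 0 {α}) := by
  intro α β h
  have hval := congrArg Subtype.val h
  have hmem : (fun _ : ℕ => α) ∈ (Cset 0 {α}).val := rfl
  rw [hval] at hmem
  exact hmem

theorem atomless [Nontrivial K] : ∀ b : RO K, ⊥ < b → ∃ c : RO K, ⊥ < c ∧ c < b := by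
  intro b hb
  have hbne : b.val.Nonempty := by
    rcases Set.eq_empty_or_nonempty b.val with h | h
    · exact absurd (Subtype.ext h : b = ⊥) (ne_of_gt hb)
    · exact h
  obtain ⟨f, hf⟩ := hbne
  obtain ⟨F, hF⟩ := b.opn f hf
  obtain ⟨m, hm⟩ := Infinite.exists_notMem_finset F
  obtain ⟨x, y, hxy⟩ := exists_pair_ne K
  set c := cylRO (Function.update f m x) (insert m F) with hc
  have hcb : c.val ⊆ b.val := by
    intro p hp
    refine hF fun i hi => ?_
    rw [hp i (Finset.mem_insert_of_mem hi)]
    exact Function.update_of_ne (by rintro rfl; exact hm hi) _ _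
  refine ⟨c, ?_, ?_⟩
  · rw [bot_lt_iff_ne_bot]
    intro h
    have hval := congrArg Subtype.val h
    exact Set.eq_empty_iff_forall_notMem.1 hval _ (mem_Cyl_self _ _)
  · refine lt_of_le_of_ne hcb ?_
    intro h
    have hp : Function.update f m y ∈ b.val := hF fun i hi =>
      Function.update_of_ne (by rintro rfl; exact hm hi) _ _
    rw [← h] at hp
    have := hp m (Finset.mem_insert_self m F)
    rw [Function.update_self, Function.update_self] at this
    exact hxy this.symm
end GH

/-- For every cardinal `lam` there exists an atomless, countably generated complete
Boolean algebra of cardinality at least `lam`. -/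
theorem exists_atomless_countably_generated_cba_of_large_card (lam : Cardinal.{u}) :
    ∃ (B : Type u) (_ : CompleteBooleanAlgebra B),
      AtomlessCBA B ∧ CountablyGeneratedCBA B ∧ lam ≤ #B := by
  set κ : Cardinal.{u} := max lam Cardinal.aleph0 with hκ
  set K : Type u := κ.ord.ToType with hK
  have hcard : #K = κ := by
    rw [hK, Cardinal.mk_toType, Cardinal.card_ord]
  haveI : Nontrivial K := by
    rw [← Cardinal.one_lt_iff_nontrivial, hcard]
    exact lt_of_lt_of_le Cardinal.one_lt_aleph0 (le_max_right _ _)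
  refine ⟨GH.RO K, inferInstance, ?_, ?_, ?_⟩
  · exact fun b hb => GH.atomless b hb
  · refine ⟨Set.range (fun p : ℕ × ℕ => GH.eRO p.1 p.2), Set.countable_range _, ?_⟩
    intro S hS hXS
    exact GH.gen_univ hS fun m n => hXS ⟨(m, n), rfl⟩
  · calc lam ≤ κ := le_max_left _ _
    _ = #K := hcard.symm
    _ ≤ #(GH.RO K) := Cardinal.mk_le_of_injective GH.Cset_zero_injective
end
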